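/- Fix δ_U > 1, π̂ ∈ (0,1), D₀₁, D₁₀ > 0. The unique minimizer δ_L*(λ̄) ∈ (0,1) of δ_L ↦ C(δ_L, δ_U; λ̄) is a monotonically nonincreasing function of λ̄ > 0. -/
import Mathlib


noncomputable def C (pihat lam D01 D10 dL dU : ℝ) : ℝ :=
  (1 - pihat) / (-D01) *
      ((Real.log dU + ((dU - 1) / (1 - dL)) * Real.log dL) / (1 + pihat * (dU - 1)))
    + pihat / D10 *
      ((dU * Real.log dU + dL * ((dU - 1) / (1 - dL)) * Real.log dL) / (1 + pihat * (dU - 1)))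
    + lam * ((dU - dL) / (1 - dL)) / (1 + pihat * (dU - 1))

theorem stmt11 (pihat D01 D10 dU : ℝ)
    (hpi : pihat ∈ Set.Ioo (0:ℝ) 1)
    (hD01 : 0 < D01) (hD10 : 0 < D10) (hdU : 1 < dU)
    (dstar : ℝ → ℝ)
    (hmin : ∀ lam > 0, dstar lam ∈ Set.Ioo (0:ℝ) 1 ∧
      IsMinOn (fun dL => C pihat lam D01 D10 dL dU) (Set.Ioo (0:ℝ) 1) (dstar lam)) :
    ∀ lam₁ lam₂ : ℝ, 0 < lam₁ → lam₁ ≤ lam₂ → dstar lam₂ ≤ dstar lam₁ := by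
  intro lam₁ lam₂ h1 hle
  rcases eq_or_lt_of_le hle with heq | hlt
  · rw [heq]
  obtain ⟨hmem1, hmin1⟩ := hmin lam₁ h1
  obtain ⟨hmem2, hmin2⟩ := hmin lam₂ (h1.trans hlt)
  have A := isMinOn_iff.mp hmin1 _ hmem2
  have B := isMinOn_iff.mp hmin2 _ hmem1
  set d₁ := dstar lam₁ with hd₁
  set d₂ := dstar lam₂ with hd₂
  obtain ⟨hd10, hd11⟩ := hmem1
  obtain ⟨hd20, hd21⟩ := hmem2
  have hk : 0 < 1 + pihat * (dU - 1) := by nlinarith [hpi.1, hpi.2]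
  set G₁ : ℝ := (dU - d₁) / (1 - d₁) / (1 + pihat * (dU - 1)) with hG₁
  set G₂ : ℝ := (dU - d₂) / (1 - d₂) / (1 + pihat * (dU - 1)) with hG₂
  have hA : C pihat lam₁ D01 D10 d₁ dU = C pihat 0 D01 D10 d₁ dU + lam₁ * G₁ := by
    simp [C, hG₁]; ring
  have hA2 : C pihat lam₁ D01 D10 d₂ dU = C pihat 0 D01 D10 d₂ dU + lam₁ * G₂ := by
    simp [C, hG₂]; ring
  have hB : C pihat lam₂ D01 D10 d₂ dU = C pihat 0 D01 D10 d₂ dU + lam₂ * G₂ := by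
    simp [C, hG₂]; ring
  have hB2 : C pihat lam₂ D01 D10 d₁ dU = C pihat 0 D01 D10 d₁ dU + lam₂ * G₁ := by
    simp [C, hG₁]; ring
  rw [hA, hA2] at A
  rw [hB, hB2] at B
  -- from A + B : lam₁ * G₁ + lam₂ * G₂ ≤ lam₁ * G₂ + lam₂ * G₁
  have hG : G₂ ≤ G₁ := by nlinarith [A, B, hlt]
  have hg : (dU - d₂) / (1 - d₂) ≤ (dU - d₁) / (1 - d₁) :=
    (div_le_div_iff_of_pos_right hk).mp hG
  have h1d₁ : 0 < 1 - d₁ := by linarith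
  have h1d₂ : 0 < 1 - d₂ := by linarith
  have hcross : (dU - d₂) * (1 - d₁) ≤ (dU - d₁) * (1 - d₂) :=
    (div_le_div_iff₀ h1d₂ h1d₁).mp hg
  nlinarith [hcross]
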